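/- arXiv:2301.07428 — 4 statements merged into one kernel-verified Lean document; each statement's English description precedes it below -/
import Mathlib

section
/- Let W be any subspace of the antisymmetric subspace H_as ⊂ ℂᵈ ⊗ ℂᵈ with dim W ≥ 1, and P_W the orthogonal projection onto W. Then the supremum over unit simple tensors x ⊗ y of ‖P_W(x⊗y)‖² equals exactly 1/2, provided W is spanned by antisymmetrized basis tensors (eᵢ ⊗ eⱼ − eⱼ ⊗ eᵢ)/√2 for pairs (i,j) in some nonempty index set. -/
noncomputable section
open scoped InnerProductSpace ComplexConjugate

/-- The simple tensor `x ⊗ y` of two vectors, realized in `EuclideanSpace ℂ (ι × κ)`. -/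
def tens {ι κ : Type*} [Fintype ι] [Fintype κ] (x : EuclideanSpace ℂ ι) (y : EuclideanSpace ℂ κ) :
    EuclideanSpace ℂ (ι × κ) :=
  WithLp.toLp 2 (fun p => x p.1 * y p.2)

/-- The antisymmetric subspace of `ℂᵈ ⊗ ℂᵈ`, spanned by `(eᵢ ⊗ eⱼ - eⱼ ⊗ eᵢ)/√2` for `i < j`. -/
def antisym (d : ℕ) : Submodule ℂ (EuclideanSpace ℂ (Fin d × Fin d)) :=
  Submodule.span ℂ {w | ∃ i j : Fin d, i < j ∧
    w = ((Real.sqrt 2 : ℂ))⁻¹ •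
      (tens (EuclideanSpace.single i 1) (EuclideanSpace.single j 1) -
       tens (EuclideanSpace.single j 1) (EuclideanSpace.single i 1))}

lemma tens_apply {ι κ : Type*} [Fintype ι] [Fintype κ] (x : EuclideanSpace ℂ ι)
    (y : EuclideanSpace ℂ κ) (i : ι) (j : κ) : tens x y (i, j) = x i * y j := rfl

lemma inner_tens {ι κ : Type*} [Fintype ι] [Fintype κ] (x x' : EuclideanSpace ℂ ι)
    (y y' : EuclideanSpace ℂ κ) :
    ⟪tens x y, tens x' y'⟫_ℂ = ⟪x, x'⟫_ℂ * ⟪y, y'⟫_ℂ := by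
  simp only [PiLp.inner_apply, RCLike.inner_apply, tens]
  rw [Finset.sum_mul_sum, Fintype.sum_prod_type]
  refine Finset.sum_congr rfl fun i _ => Finset.sum_congr rfl fun j _ => ?_
  simp [map_mul]; ring
lemma antisym_apply {d : ℕ} {v : EuclideanSpace ℂ (Fin d × Fin d)} (hv : v ∈ antisym d)
    (i j : Fin d) : v (j, i) = - v (i, j) := by
  induction hv using Submodule.span_induction with
  | mem w hw =>
    obtain ⟨a, b, hab, rfl⟩ := hw
    simp only [PiLp.smul_apply, PiLp.sub_apply, tens_apply, smul_eq_mul,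
      EuclideanSpace.single_apply]
    split_ifs <;> ring
  | zero => simp
  | add u w hu hw ihu ihw => simp only [PiLp.add_apply, ihu, ihw]; ring
  | smul c u hu ihu => simp only [PiLp.smul_apply, ihu, smul_eq_mul]; ring

lemma inner_tens_swap {d : ℕ} {v : EuclideanSpace ℂ (Fin d × Fin d)} (hv : v ∈ antisym d)
    (x y : EuclideanSpace ℂ (Fin d)) :
    ⟪v, tens y x⟫_ℂ = - ⟪v, tens x y⟫_ℂ := by
  have key : ∀ (i j : Fin d), conj (v (j, i)) * (y j * x i)
      = -(conj (v (i, j)) * (x i * y j)) := by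
    intro i j
    rw [antisym_apply hv i j, map_neg]; ring
  simp only [PiLp.inner_apply, RCLike.inner_apply, tens]
  simp only [mul_comm _ (conj (v _))]
  calc (∑ p : Fin d × Fin d, conj (v p) * (y p.1 * x p.2))
      = ∑ i : Fin d, ∑ j : Fin d, conj (v (j, i)) * (y j * x i) := by
        rw [Fintype.sum_prod_type, Finset.sum_comm]
    _ = ∑ i : Fin d, ∑ j : Fin d, -(conj (v (i, j)) * (x i * y j)) := by
        simp only [key]
    _ = -∑ p : Fin d × Fin d, conj (v p) * (x p.1 * y p.2) := by
        rw [Fintype.sum_prod_type]; simp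

lemma norm_tens_sq {ι κ : Type*} [Fintype ι] [Fintype κ] (x : EuclideanSpace ℂ ι)
    (y : EuclideanSpace ℂ κ) : ‖tens x y‖ ^ 2 = ‖x‖ ^ 2 * ‖y‖ ^ 2 := by
  have e := inner_tens x x y y
  rw [inner_self_eq_norm_sq_to_K, inner_self_eq_norm_sq_to_K, inner_self_eq_norm_sq_to_K] at e
  exact_mod_cast e

lemma contract_add {d : ℕ} (u v w : EuclideanSpace ℂ (Fin d)) (s : ℂ) :
    ∑ j, conj (u j) * (v j + s * w j) = ⟪u, v⟫_ℂ + s * ⟪u, w⟫_ℂ := by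
  simp only [PiLp.inner_apply, RCLike.inner_apply, Finset.mul_sum, ← Finset.sum_add_distrib]
  exact Finset.sum_congr rfl fun j _ => by ring

lemma contract_smul {d : ℕ} (u w : EuclideanSpace ℂ (Fin d)) (s : ℂ) :
    ∑ j, conj (u j) * (s * w j) = s * ⟪u, w⟫_ℂ := by
  simp only [PiLp.inner_apply, RCLike.inner_apply, Finset.mul_sum]
  exact Finset.sum_congr rfl fun j _ => by ring

lemma contract_mulr {d : ℕ} (u v : EuclideanSpace ℂ (Fin d)) (c : ℂ) :
    ∑ j, conj (u j) * (v j * c) = ⟪u, v⟫_ℂ * c := by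
  simp only [PiLp.inner_apply, RCLike.inner_apply, Finset.sum_mul]
  exact Finset.sum_congr rfl fun j _ => by ring

lemma upper_bound {d : ℕ} (W : Submodule ℂ (EuclideanSpace ℂ (Fin d × Fin d)))
    (hWas : W ≤ antisym d) (x y : EuclideanSpace ℂ (Fin d)) (hxy : ‖tens x y‖ = 1) :
    ‖(W.orthogonalProjectionOnto (tens x y) : EuclideanSpace ℂ (Fin d × Fin d))‖ ^ 2 ≤ 1 / 2 := by
  set z := tens x y with hz
  set v : EuclideanSpace ℂ (Fin d × Fin d) := (↑(W.orthogonalProjectionOnto z) : EuclideanSpace ℂ (Fin d × Fin d)) with hvdef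
  have hvW : v ∈ W := SetLike.coe_mem _
  have hva : v ∈ antisym d := hWas hvW
  -- ⟪v, z⟫ = ‖v‖^2
  have h1 : ⟪v, z⟫_ℂ = (‖v‖ : ℂ) ^ 2 := by
    have horth : z - v ∈ Wᗮ := W.sub_starProjection_mem_orthogonal z
    have h0 : ⟪v, z - v⟫_ℂ = 0 := (Submodule.mem_orthogonal W _).mp horth v hvW
    have h0' : ⟪v, z⟫_ℂ = ⟪v, v⟫_ℂ := by
      have e := inner_sub_right (𝕜 := ℂ) v z v
      rw [h0] at e
      linear_combination -e
    rw [h0', inner_self_eq_norm_sq_to_K]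
    norm_cast
  -- ⟪v, z⟫ in terms of the antisymmetrized tensor
  have h2 : ⟪v, z⟫_ℂ = ⟪v, (2 : ℂ)⁻¹ • (tens x y - tens y x)⟫_ℂ := by
    rw [inner_smul_right, inner_sub_right, inner_tens_swap hva x y]
    ring
  -- norms
  have hyx : ‖tens y x‖ = 1 := by
    have e : (‖tens y x‖ : ℝ) ^ 2 = ‖tens x y‖ ^ 2 := by
      rw [norm_tens_sq, norm_tens_sq]; ring
    nlinarith [norm_nonneg (tens y x), norm_nonneg (tens x y)]
  have hre : (⟪tens x y, tens y x⟫_ℂ).re ≥ 0 := by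
    rw [inner_tens, ← inner_conj_symm y x]
    rw [Complex.mul_re, Complex.conj_re, Complex.conj_im]
    nlinarith [sq_nonneg (⟪x, y⟫_ℂ).re, sq_nonneg (⟪x, y⟫_ℂ).im]
  have hmsq : ‖(2 : ℂ)⁻¹ • (tens x y - tens y x)‖ ^ 2 ≤ 1 / 2 := by
    have hsub : ‖tens x y - tens y x‖ ^ 2 ≤ 2 := by
      have e := norm_sub_sq (𝕜 := ℂ) (tens x y) (tens y x)
      rw [hxy, hyx] at e
      have : RCLike.re ⟪tens x y, tens y x⟫_ℂ = (⟪tens x y, tens y x⟫_ℂ).re := rfl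
      rw [this] at e
      nlinarith
    rw [norm_smul]
    have : ‖(2 : ℂ)⁻¹‖ = 2⁻¹ := by
      rw [norm_inv]; simp
    rw [this, mul_pow]
    nlinarith
  -- conclude
  have hCS : ‖v‖ ^ 2 ≤ ‖v‖ * ‖(2 : ℂ)⁻¹ • (tens x y - tens y x)‖ := by
    have := norm_inner_le_norm (𝕜 := ℂ) v ((2 : ℂ)⁻¹ • (tens x y - tens y x))
    rw [← h2, h1] at this
    calc ‖v‖ ^ 2 = ‖((‖v‖ : ℂ)) ^ 2‖ := by
          rw [norm_pow, Complex.norm_real, Real.norm_eq_abs, abs_norm]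
      _ ≤ _ := this
  have hv0 : (0 : ℝ) ≤ ‖v‖ := norm_nonneg _
  have hm0 : (0 : ℝ) ≤ ‖(2 : ℂ)⁻¹ • (tens x y - tens y x)‖ := norm_nonneg _
  nlinarith

set_option maxHeartbeats 1000000 in
/-- if `W` is a subspace of the antisymmetric subspace `H_as ⊂ ℂᵈ ⊗ ℂᵈ`, spanned
by antisymmetrized tensors `(h_{p₁} ⊗ f_{p₂} - h_{p₂} ⊗ f_{p₁})/√2` over a nonempty set of pairs
`p₁ < p₂`, built from orthonormal bases `{hᵢ}`, `{fᵢ}` of `ℂᵈ`, then the supremum over unit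
simple tensors `x ⊗ y` of `‖P_W(x ⊗ y)‖²` equals exactly `1/2`. -/
theorem sup_proj_subspace_antisym_eq_half (d : ℕ) (hd : 2 ≤ d)
    (h f : Fin d → EuclideanSpace ℂ (Fin d))
    (hh : Orthonormal ℂ h) (hf : Orthonormal ℂ f)
    (hbh : Submodule.span ℂ (Set.range h) = ⊤) (hbf : Submodule.span ℂ (Set.range f) = ⊤)
    (S : Finset (Fin d × Fin d)) (hS : S.Nonempty) (hord : ∀ p ∈ S, p.1 < p.2)
    (W : Submodule ℂ (EuclideanSpace ℂ (Fin d × Fin d)))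
    (hW : W = Submodule.span ℂ
      ((fun p : Fin d × Fin d => ((Real.sqrt 2 : ℂ))⁻¹ •
        (tens (h p.1) (f p.2) - tens (h p.2) (f p.1))) '' S))
    (hWas : W ≤ antisym d) :
    sSup {t : ℝ | ∃ x y : EuclideanSpace ℂ (Fin d),
        ‖tens x y‖ = 1 ∧ t = ‖W.orthogonalProjectionOnto (tens x y)‖ ^ 2} = 1 / 2 := by
  obtain ⟨p, hp⟩ := hS
  set a := p.1 with ha'
  set b := p.2 with hb'
  have hab : a ≠ b := ne_of_lt (hord p hp)
  -- inner product values
  have hiih := (orthonormal_iff_ite (𝕜 := ℂ)).mp hh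
  have hiif := (orthonormal_iff_ite (𝕜 := ℂ)).mp hf
  have haa : ⟪h a, h a⟫_ℂ = 1 := by rw [hiih]; simp
  have hbb : ⟪h b, h b⟫_ℂ = 1 := by rw [hiih]; simp
  have hab0 : ⟪h a, h b⟫_ℂ = 0 := by rw [hiih]; simp [hab]
  have hba0 : ⟪h b, h a⟫_ℂ = 0 := by rw [hiih]; simp [Ne.symm hab]
  have hfaa : ⟪f a, f a⟫_ℂ = 1 := by rw [hiif]; simp
  -- the generator lies in W, hence in the antisymmetric subspace
  set w : EuclideanSpace ℂ (Fin d × Fin d) :=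
    ((Real.sqrt 2 : ℂ))⁻¹ • (tens (h a) (f b) - tens (h b) (f a)) with hwdef
  have hwW : w ∈ W := by
    rw [hW]
    exact Submodule.subset_span ⟨p, hp, rfl⟩
  have hsqrt2 : ((Real.sqrt 2 : ℂ)) ≠ 0 := by
    simp only [ne_eq, Complex.ofReal_eq_zero]
    positivity
  have hA : (tens (h a) (f b) - tens (h b) (f a)) ∈ antisym d := by
    have : (tens (h a) (f b) - tens (h b) (f a))
        = (Real.sqrt 2 : ℂ) • w := by
      rw [hwdef, smul_smul, mul_inv_cancel₀ hsqrt2, one_smul]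
    rw [this]
    exact Submodule.smul_mem _ _ (hWas hwW)
  -- pointwise antisymmetry of the generator
  have sym : ∀ i j : Fin d, h a i * f b j + h a j * f b i = h b i * f a j + h b j * f a i := by
    intro i j
    have := antisym_apply hA i j
    simp only [PiLp.sub_apply, tens_apply] at this
    linear_combination this
  -- contraction identities
  have key1 : ∀ j, f b j + ⟪h a, f b⟫_ℂ * h a j = ⟪h a, f a⟫_ℂ * h b j := by
    intro j
    have hsum : ∑ i, conj (h a i) * (h a i * f b j + h a j * f b i)
        = ∑ i, conj (h a i) * (h b i * f a j + h b j * f a i) :=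
      Finset.sum_congr rfl fun i _ => by rw [sym i j]
    have lhs_eq : ∑ i, conj (h a i) * (h a i * f b j + h a j * f b i)
        = ⟪h a, h a⟫_ℂ * f b j + ⟪h a, f b⟫_ℂ * h a j := by
      simp only [PiLp.inner_apply, RCLike.inner_apply, Finset.sum_mul]
      rw [← Finset.sum_add_distrib]
      exact Finset.sum_congr rfl fun i _ => by ring
    have rhs_eq : ∑ i, conj (h a i) * (h b i * f a j + h b j * f a i)
        = ⟪h a, h b⟫_ℂ * f a j + ⟪h a, f a⟫_ℂ * h b j := by
      simp only [PiLp.inner_apply, RCLike.inner_apply, Finset.sum_mul]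
      rw [← Finset.sum_add_distrib]
      exact Finset.sum_congr rfl fun i _ => by ring
    rw [lhs_eq, rhs_eq, haa, hab0] at hsum
    linear_combination hsum
  have key2 : ∀ j, h a j * ⟪h b, f b⟫_ℂ = f a j + ⟪h b, f a⟫_ℂ * h b j := by
    intro j
    have hsum : ∑ i, conj (h b i) * (h a i * f b j + h a j * f b i)
        = ∑ i, conj (h b i) * (h b i * f a j + h b j * f a i) :=
      Finset.sum_congr rfl fun i _ => by rw [sym i j]
    have lhs_eq : ∑ i, conj (h b i) * (h a i * f b j + h a j * f b i)
        = ⟪h b, h a⟫_ℂ * f b j + ⟪h b, f b⟫_ℂ * h a j := by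
      simp only [PiLp.inner_apply, RCLike.inner_apply, Finset.sum_mul]
      rw [← Finset.sum_add_distrib]
      exact Finset.sum_congr rfl fun i _ => by ring
    have rhs_eq : ∑ i, conj (h b i) * (h b i * f a j + h b j * f a i)
        = ⟪h b, h b⟫_ℂ * f a j + ⟪h b, f a⟫_ℂ * h b j := by
      simp only [PiLp.inner_apply, RCLike.inner_apply, Finset.sum_mul]
      rw [← Finset.sum_add_distrib]
      exact Finset.sum_congr rfl fun i _ => by ring
    rw [lhs_eq, rhs_eq, hba0, hbb] at hsum
    linear_combination hsum
  -- vanishing cross terms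
  set t : ℂ := ⟪h a, f a⟫_ℂ with htdef
  have hs0 : ⟪h a, f b⟫_ℂ = 0 := by
    have hsum : ∑ j, conj (h a j) * (f b j + ⟪h a, f b⟫_ℂ * h a j)
        = ∑ j, conj (h a j) * (t * h b j) :=
      Finset.sum_congr rfl fun j _ => by rw [key1 j]
    rw [contract_add (h a) (f b) (h a), contract_smul (h a) (h b), haa, hab0] at hsum
    have h2 : (2 : ℂ) * ⟪h a, f b⟫_ℂ = 0 := by linear_combination hsum
    have : (2 : ℂ) ≠ 0 := two_ne_zero
    exact (mul_eq_zero.mp h2).resolve_left this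
  have hs0' : ⟪h b, f a⟫_ℂ = 0 := by
    have hsum : ∑ j, conj (h b j) * (h a j * ⟪h b, f b⟫_ℂ)
        = ∑ j, conj (h b j) * (f a j + ⟪h b, f a⟫_ℂ * h b j) :=
      Finset.sum_congr rfl fun j _ => by rw [key2 j]
    rw [contract_mulr (h b) (h a), contract_add (h b) (f a) (h b), hba0, hbb] at hsum
    have h2 : (2 : ℂ) * ⟪h b, f a⟫_ℂ = 0 := by linear_combination -hsum
    have : (2 : ℂ) ≠ 0 := two_ne_zero
    exact (mul_eq_zero.mp h2).resolve_left this
  -- f b = t • h b, f a = t • h a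
  have hfb : ∀ j, f b j = t * h b j := by
    intro j
    have := key1 j
    rw [hs0] at this
    linear_combination this
  have hbfb : ⟪h b, f b⟫_ℂ = t := by
    have e : ⟪h b, f b⟫_ℂ = ∑ j, conj (h b j) * (t * h b j) := by
      simp only [PiLp.inner_apply, RCLike.inner_apply]
      exact Finset.sum_congr rfl fun j _ => by rw [hfb j]; ring
    rw [e, contract_smul, hbb, mul_one]
  have hfa : ∀ j, f a j = t * h a j := by
    intro j
    have := key2 j
    rw [hs0', hbfb] at this
    linear_combination -this
  -- |t| = 1
  have htnorm : conj t * t = 1 := by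
    have e : ⟪f a, f a⟫_ℂ = ∑ j, conj t * t * (conj (h a j) * h a j) := by
      simp only [PiLp.inner_apply, RCLike.inner_apply]
      exact Finset.sum_congr rfl fun j _ => by rw [hfa j, map_mul]; ring
    rw [← Finset.mul_sum] at e
    have e2 : (∑ j, conj (h a j) * h a j) = ⟪h a, h a⟫_ℂ := by
      simp only [PiLp.inner_apply, RCLike.inner_apply]
      exact Finset.sum_congr rfl fun _ _ => mul_comm _ _
    rw [e2, haa, mul_one, hfaa] at e
    exact e.symm
  have htnorm1 : ‖t‖ = 1 := by
    have := congrArg (‖·‖) htnorm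
    simp only [norm_mul, Complex.norm_conj, norm_one] at this
    nlinarith [norm_nonneg t]
  -- the distinguished unit simple tensor
  set z₀ : EuclideanSpace ℂ (Fin d × Fin d) := tens (h a) (h b) with hz0def
  have hz0 : ‖z₀‖ = 1 := by
    have e : ‖z₀‖ ^ 2 = ‖h a‖ ^ 2 * ‖h b‖ ^ 2 := norm_tens_sq (h a) (h b)
    rw [hh.1 a, hh.1 b] at e
    nlinarith [norm_nonneg z₀]
  -- inner products with f expressed through h
  have hfbhb : ⟪f b, h b⟫_ℂ = conj t := by
    have e : ⟪f b, h b⟫_ℂ = ∑ j, conj t * (conj (h b j) * h b j) := by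
      simp only [PiLp.inner_apply, RCLike.inner_apply]
      exact Finset.sum_congr rfl fun j _ => by rw [hfb j, map_mul]; ring
    rw [← Finset.mul_sum] at e
    have e2 : (∑ j, conj (h b j) * h b j) = ⟪h b, h b⟫_ℂ := by
      simp only [PiLp.inner_apply, RCLike.inner_apply]
      exact Finset.sum_congr rfl fun _ _ => mul_comm _ _
    rw [e2, hbb, mul_one] at e
    exact e
  have hfahb : ⟪f a, h b⟫_ℂ = conj t * ⟪h a, h b⟫_ℂ := by
    have e : ⟪f a, h b⟫_ℂ = ∑ j, conj t * (conj (h a j) * h b j) := by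
      simp only [PiLp.inner_apply, RCLike.inner_apply]
      exact Finset.sum_congr rfl fun j _ => by rw [hfa j, map_mul]; ring
    rw [← Finset.mul_sum] at e
    have e2 : (∑ j, conj (h a j) * h b j) = ⟪h a, h b⟫_ℂ := by
      simp only [PiLp.inner_apply, RCLike.inner_apply]
      exact Finset.sum_congr rfl fun _ _ => mul_comm _ _
    rw [e2] at e
    exact e
  -- inner product of the generator with z₀
  have hwz : ⟪w, z₀⟫_ℂ = conj ((Real.sqrt 2 : ℂ))⁻¹ * conj t := by
    rw [hwdef, inner_smul_left, inner_sub_left, hz0def, inner_tens, inner_tens,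
      haa, hba0, hfbhb, hfahb, hab0]
    ring
  have hnormc : ‖((Real.sqrt 2 : ℂ))⁻¹‖ = (Real.sqrt 2)⁻¹ := by
    rw [norm_inv, Complex.norm_real, Real.norm_eq_abs, abs_of_nonneg (Real.sqrt_nonneg 2)]
  have hsq2 : Real.sqrt 2 * Real.sqrt 2 = 2 := Real.mul_self_sqrt (by norm_num)
  have hsq2pos : 0 < Real.sqrt 2 := Real.sqrt_pos.mpr (by norm_num)
  have htc : ‖conj t‖ = 1 := by rw [RCLike.norm_conj]; exact htnorm1
  have hwznorm : ‖⟪w, z₀⟫_ℂ‖ = (Real.sqrt 2)⁻¹ := by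
    rw [hwz, norm_mul, RCLike.norm_conj, hnormc, htc, mul_one]
  -- norm of the generator
  have hwnorm : ‖w‖ = 1 := by
    have hfbfb : ⟪f b, f b⟫_ℂ = 1 := by rw [hiif]; simp
    have hfbfa : ⟪f b, f a⟫_ℂ = 0 := by rw [hiif]; simp [Ne.symm hab]
    have hfafb : ⟪f a, f b⟫_ℂ = 0 := by rw [hiif]; simp [hab]
    have hww : ⟪w, w⟫_ℂ = 1 := by
      rw [hwdef, inner_smul_left, inner_smul_right, inner_sub_left, inner_sub_right,
        inner_sub_right, inner_tens, inner_tens, inner_tens, inner_tens,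
        haa, hab0, hba0, hbb, hfbfb, hfbfa, hfafb, hfaa]
      rw [map_inv₀, Complex.conj_ofReal]
      have hsq2c : ((Real.sqrt 2 : ℝ) : ℂ) * ((Real.sqrt 2 : ℝ) : ℂ) = 2 := by
        rw [← Complex.ofReal_mul, hsq2]; norm_num
      field_simp
      linear_combination -hsq2c
    have e : ‖w‖ ^ 2 = 1 := by
      have h' := hww
      rw [inner_self_eq_norm_sq_to_K] at h'
      have h2 : ((‖w‖ ^ 2 : ℝ) : ℂ) = ((1 : ℝ) : ℂ) := by push_cast; exact h'
      exact_mod_cast h2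
    nlinarith [norm_nonneg w]
  -- the projection of z₀ has norm² exactly 1/2
  have hup := upper_bound W hWas (h a) (h b) hz0
  have hlow : (1 / 2 : ℝ)
      ≤ ‖(W.orthogonalProjectionOnto z₀ : EuclideanSpace ℂ (Fin d × Fin d))‖ ^ 2 := by
    set v : EuclideanSpace ℂ (Fin d × Fin d) :=
      (W.orthogonalProjectionOnto z₀ : EuclideanSpace ℂ (Fin d × Fin d)) with hvdef
    have horth : z₀ - v ∈ Wᗮ := W.sub_starProjection_mem_orthogonal z₀
    have h0 : ⟪w, z₀ - v⟫_ℂ = 0 := (Submodule.mem_orthogonal W _).mp horth w hwW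
    have hwv : ⟪w, z₀⟫_ℂ = ⟪w, v⟫_ℂ := by
      have e := inner_sub_right (𝕜 := ℂ) w z₀ v
      rw [h0] at e
      linear_combination -e
    have hCS : ‖⟪w, v⟫_ℂ‖ ≤ ‖v‖ := by
      have := norm_inner_le_norm (𝕜 := ℂ) w v
      rwa [hwnorm, one_mul] at this
    rw [← hwv, hwznorm] at hCS
    have : (Real.sqrt 2)⁻¹ * (Real.sqrt 2)⁻¹ = 1 / 2 := by
      rw [← mul_inv, hsq2]; norm_num
    have hmm : (Real.sqrt 2)⁻¹ * (Real.sqrt 2)⁻¹ ≤ ‖v‖ * ‖v‖ :=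
      mul_le_mul hCS hCS (by positivity) (norm_nonneg v)
    nlinarith [hmm]
  have heq : ‖(W.orthogonalProjectionOnto z₀ : EuclideanSpace ℂ (Fin d × Fin d))‖ ^ 2
      = 1 / 2 := le_antisymm hup hlow
  -- conclude about the supremum
  have hmemT : (1 / 2 : ℝ) ∈ {t : ℝ | ∃ x y : EuclideanSpace ℂ (Fin d),
      ‖tens x y‖ = 1 ∧ t = ‖W.orthogonalProjectionOnto (tens x y)‖ ^ 2} := by
    refine ⟨h a, h b, hz0, ?_⟩
    rw [← hz0def, Submodule.coe_norm]
    exact heq.symm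
  have hubT : ∀ r ∈ {t : ℝ | ∃ x y : EuclideanSpace ℂ (Fin d),
      ‖tens x y‖ = 1 ∧ t = ‖W.orthogonalProjectionOnto (tens x y)‖ ^ 2}, r ≤ 1 / 2 := by
    rintro r ⟨x, y, hxy, rfl⟩
    rw [Submodule.coe_norm]
    exact upper_bound W hWas x y hxy
  exact le_antisymm (csSup_le ⟨1 / 2, hmemT⟩ hubT) (le_csSup ⟨1 / 2, hubT⟩ hmemT)
end
end

section
/- Suppose S_p^min(N) ≥ C for some C > 0, and suppose there is a unit vector ψ in the range W₁ ⊗ W₂ of V ⊗ V̄ with S_p(Tr_{E₁E₂}|ψ⟩⟨ψ|) ≤ c where c < 2C. Then S_p^min(N ⊗ N̄) < S_p^min(N) + S_p^min(N̄), i.e., the pair (N, N̄) breaks additivity of the minimal output Rényi p-entropy. -/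
noncomputable section

/-- The reduced density matrix (partial trace over the second factor) of the pure state
`|ψ⟩⟨ψ|`. -/
def redMatrix {ι κ : Type*} [Fintype ι] [Fintype κ] (ψ : EuclideanSpace ℂ (ι × κ)) :
    Matrix ι ι ℂ :=
  Matrix.of fun i j => ∑ e : κ, ψ (i, e) * star (ψ (j, e))

theorem redMatrix_isHermitian {ι κ : Type*} [Fintype ι] [Fintype κ]
    (ψ : EuclideanSpace ℂ (ι × κ)) : (redMatrix ψ).IsHermitian := by
  ext i j
  simp [redMatrix, Matrix.IsHermitian, Matrix.conjTranspose_apply, mul_comm]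

/-- The Rényi `p`-entropy `S_p(Tr_κ |ψ⟩⟨ψ|) = (1/(1-p)) log₂ ∑ᵢ λᵢᵖ` of the reduced state of a
pure bipartite state `ψ`, computed from the eigenvalues of the reduced density matrix. -/
def renyiOut (p : ℝ) {ι κ : Type*} [Fintype ι] [Fintype κ] [DecidableEq ι]
    (ψ : EuclideanSpace ℂ (ι × κ)) : ℝ :=
  (1 / (1 - p)) * Real.logb 2 (∑ i, ((redMatrix_isHermitian ψ).eigenvalues i) ^ p)

/-- The rearrangement `η : (k₁ ⊗ f₁) ⊗ (k₂ ⊗ f₂) ↦ (k₁ ⊗ k₂) ⊗ (f₁ ⊗ f₂)`. -/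
def eta {α β γ δ : Type*} [Fintype α] [Fintype β] [Fintype γ] [Fintype δ]
    (ψ : EuclideanSpace ℂ ((α × β) × (γ × δ))) : EuclideanSpace ℂ ((α × γ) × (β × δ)) :=
  WithLp.toLp 2 (fun q => ψ ((q.1.1, q.2.1), (q.1.2, q.2.2)))

/-- Entrywise complex conjugation of a vector. -/
def starVec {ι : Type*} [Fintype ι] (ψ : EuclideanSpace ℂ ι) : EuclideanSpace ℂ ι :=
  WithLp.toLp 2 (fun i => star (ψ i))


open Matrix Polynomial in
theorem charpoly_unitary_conj' {n : Type*} [Fintype n] [DecidableEq n]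
    (U : Matrix.unitaryGroup n ℂ) (B : Matrix n n ℂ) :
    ((U : Matrix n n ℂ) * B * star (U : Matrix n n ℂ)).charpoly = B.charpoly := by
  have hUU : (U : Matrix n n ℂ) * star (U : Matrix n n ℂ) = 1 := U.2.2
  have hkey : charmatrix ((U : Matrix n n ℂ) * B * star (U : Matrix n n ℂ))
      = (C : ℂ →+* ℂ[X]).mapMatrix (U : Matrix n n ℂ) * charmatrix B *
        (C : ℂ →+* ℂ[X]).mapMatrix (star (U : Matrix n n ℂ)) := by
    rw [charmatrix, charmatrix, mul_sub, sub_mul]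
    congr 1
    · rw [← (Matrix.scalar_commute (X : ℂ[X]) (fun r' => Commute.all _ _)
        ((C : ℂ →+* ℂ[X]).mapMatrix (U : Matrix n n ℂ))).eq, mul_assoc, ← _root_.map_mul, hUU,
        RingHom.map_one, mul_one]
    · rw [← _root_.map_mul, ← _root_.map_mul]
  have hdet : ((C : ℂ →+* ℂ[X]).mapMatrix (U : Matrix n n ℂ)).det *
      ((C : ℂ →+* ℂ[X]).mapMatrix (star (U : Matrix n n ℂ))).det = 1 := by
    rw [← det_mul, ← _root_.map_mul, hUU, RingHom.map_one, det_one]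
  rw [Matrix.charpoly, hkey, det_mul, det_mul, Matrix.charpoly]
  calc ((C : ℂ →+* ℂ[X]).mapMatrix (U : Matrix n n ℂ)).det * (charmatrix B).det *
      ((C : ℂ →+* ℂ[X]).mapMatrix (star (U : Matrix n n ℂ))).det
      = (((C : ℂ →+* ℂ[X]).mapMatrix (U : Matrix n n ℂ)).det *
        ((C : ℂ →+* ℂ[X]).mapMatrix (star (U : Matrix n n ℂ))).det) * (charmatrix B).det := by
        ring
    _ = (charmatrix B).det := by rw [hdet, one_mul]

open Matrix Polynomial in
theorem roots_charpoly_herm {n : Type*} [Fintype n] [DecidableEq n]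
    {A : Matrix n n ℂ} (hA : A.IsHermitian) :
    A.charpoly.roots = Finset.univ.val.map fun i => (hA.eigenvalues i : ℂ) := by
  have hdiag : (Matrix.diagonal (RCLike.ofReal ∘ hA.eigenvalues) : Matrix n n ℂ).charpoly
      = ((Finset.univ.val.map fun i => ((hA.eigenvalues i : ℂ))).map fun a => X - C a).prod := by
    rw [Matrix.charpoly, charmatrix, Multiset.map_map]
    rw [show ((Matrix.scalar n (X : ℂ[X])) - (C : ℂ →+* ℂ[X]).mapMatrix
        (Matrix.diagonal (RCLike.ofReal ∘ hA.eigenvalues)))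
        = Matrix.diagonal (fun i => (X : ℂ[X]) - C ((hA.eigenvalues i : ℂ))) by
      ext i j
      by_cases h : i = j <;>
        simp [h, Matrix.scalar, Matrix.diagonal_apply, RingHom.mapMatrix_apply, Matrix.map_apply]]
    rw [Matrix.det_diagonal]
    rfl
  conv_lhs => rw [hA.spectral_theorem, Unitary.conjStarAlgAut_apply, charpoly_unitary_conj', hdiag]
  exact Polynomial.roots_multiset_prod_X_sub_C _

theorem sum_pow_eigen_conj {n : Type*} [Fintype n] [DecidableEq n]
    {A : Matrix n n ℂ} (hA : A.IsHermitian) (hB : (A.map (starRingEnd ℂ)).IsHermitian) (p : ℝ) :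
    ∑ i, hB.eigenvalues i ^ p = ∑ i, hA.eigenvalues i ^ p := by
  have h1 : (A.map (starRingEnd ℂ)).charpoly.roots = A.charpoly.roots.map (starRingEnd ℂ) := by
    rw [Matrix.charpoly_map]
    exact (IsAlgClosed.splits _).roots_map _
  have h2 : (Finset.univ.val.map fun i => (hB.eigenvalues i : ℂ))
      = Finset.univ.val.map fun i => (hA.eigenvalues i : ℂ) := by
    rw [← roots_charpoly_herm hB, h1, roots_charpoly_herm hA, Multiset.map_map]
    congr 1
    funext i
    simp [Complex.conj_ofReal]
  have h3 : (Finset.univ.val.map hB.eigenvalues) = Finset.univ.val.map hA.eigenvalues := by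
    apply Multiset.map_injective (f := (Complex.ofReal : ℝ → ℂ)) Complex.ofReal_injective
    rw [Multiset.map_map, Multiset.map_map]
    exact h2
  calc ∑ i, hB.eigenvalues i ^ p
      = ((Finset.univ.val.map hB.eigenvalues).map (· ^ p)).sum := by
        rw [Multiset.map_map]; rfl
    _ = ((Finset.univ.val.map hA.eigenvalues).map (· ^ p)).sum := by rw [h3]
    _ = ∑ i, hA.eigenvalues i ^ p := by rw [Multiset.map_map]; rfl

theorem redMatrix_starVec {ι κ : Type*} [Fintype ι] [Fintype κ] (ψ : EuclideanSpace ℂ (ι × κ)) :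
    redMatrix (starVec ψ) = (redMatrix ψ).map (starRingEnd ℂ) := by
  ext i j
  simp only [redMatrix, starVec, PiLp.toLp_apply, Matrix.of_apply, Matrix.map_apply, starRingEnd_apply, star_sum,
    star_mul', star_star]

theorem sum_eigen_congr {ι : Type*} [Fintype ι] [DecidableEq ι] {M N : Matrix ι ι ℂ}
    (h : M = N) (hM : M.IsHermitian) (hN : N.IsHermitian) (p : ℝ) :
    ∑ i, hM.eigenvalues i ^ p = ∑ i, hN.eigenvalues i ^ p := by subst h; rfl

theorem renyiOut_starVec (p : ℝ) {ι κ : Type*} [Fintype ι] [Fintype κ] [DecidableEq ι]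
    (ψ : EuclideanSpace ℂ (ι × κ)) : renyiOut p (starVec ψ) = renyiOut p ψ := by
  have hB : ((redMatrix ψ).map (starRingEnd ℂ)).IsHermitian := by
    have h := redMatrix_isHermitian (starVec ψ); rwa [redMatrix_starVec] at h
  unfold renyiOut
  rw [sum_eigen_congr (redMatrix_starVec ψ) _ hB p,
    sum_pow_eigen_conj (redMatrix_isHermitian ψ) hB p]

theorem norm_starVec {ι : Type*} [Fintype ι] (ψ : EuclideanSpace ℂ ι) : ‖starVec ψ‖ = ‖ψ‖ := by
  simp only [EuclideanSpace.norm_eq, starVec, PiLp.toLp_apply]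
  congr 1
  exact Finset.sum_congr rfl fun i _ => by rw [norm_star]

theorem starVec_starVec {ι : Type*} [Fintype ι] (ψ : EuclideanSpace ℂ ι) :
    starVec (starVec ψ) = ψ := PiLp.ext fun i => star_star _

/-- let `W = ran V` define the channel `N` and `W̄` (the conjugate subspace,
`ran V̄`) the conjugate channel `N̄`, and `𝒲 = W ⊗ W̄ = ran (V ⊗ V̄)`.  If `S_p^min(N) ≥ C > 0`
and some unit vector `ψ ∈ 𝒲` has `S_p(Tr_{E₁E₂}|ψ⟩⟨ψ|) ≤ c` with `c < 2C`, then
`S_p^min(N ⊗ N̄) < S_p^min(N) + S_p^min(N̄)`: the pair `(N, N̄)` breaks additivity of the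
minimal output Rényi `p`-entropy. -/
theorem additivity_breaking (dK dE dH : ℕ) (p C c : ℝ) (hp : 1 < p) (hC : 0 < C)
    (V : EuclideanSpace ℂ (Fin dH) →ₗᵢ[ℂ] EuclideanSpace ℂ (Fin dK × Fin dE))
    (W Wbar : Submodule ℂ (EuclideanSpace ℂ (Fin dK × Fin dE)))
    (hW : LinearMap.range V.toLinearMap = W)
    (hWbar : Wbar = Submodule.span ℂ {v | ∃ w ∈ W, v = starVec w})
    (Wt : Submodule ℂ (EuclideanSpace ℂ ((Fin dK × Fin dE) × (Fin dK × Fin dE))))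
    (hWt : Wt = Submodule.span ℂ {ψ | ∃ a ∈ W, ∃ b ∈ Wbar, ψ = tens a b})
    (hmin : C ≤ sInf {t : ℝ | ∃ w ∈ W, ‖w‖ = 1 ∧ t = renyiOut p w})
    (hψ : ∃ ψ ∈ Wt, ‖ψ‖ = 1 ∧ renyiOut p (eta ψ) ≤ c)
    (hc : c < 2 * C) :
    sInf {t : ℝ | ∃ ψ ∈ Wt, ‖ψ‖ = 1 ∧ t = renyiOut p (eta ψ)} <
      sInf {t : ℝ | ∃ w ∈ W, ‖w‖ = 1 ∧ t = renyiOut p w} +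
      sInf {t : ℝ | ∃ w ∈ Wbar, ‖w‖ = 1 ∧ t = renyiOut p w} := by
  have hstst := starVec_starVec (ι := Fin dK × Fin dE)
  -- The conjugate subspace is exactly `{v | starVec v ∈ W}`.
  let W' : Submodule ℂ (EuclideanSpace ℂ (Fin dK × Fin dE)) :=
    { carrier := {v | starVec v ∈ W}
      add_mem' := fun {a b} ha hb => by
        have h : starVec (a + b) = starVec a + starVec b := PiLp.ext fun i => star_add _ _
        show starVec (a + b) ∈ W
        rw [h]; exact W.add_mem ha hb
      zero_mem' := by
        show starVec (0 : EuclideanSpace ℂ (Fin dK × Fin dE)) ∈ W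
        have h : starVec (0 : EuclideanSpace ℂ (Fin dK × Fin dE)) = 0 :=
          PiLp.ext fun i => star_zero _
        rw [h]; exact W.zero_mem
      smul_mem' := fun c v hv => by
        have h : starVec (c • v) = (starRingEnd ℂ c) • starVec v := by
          refine PiLp.ext fun i => ?_
          show star (c * v i) = (starRingEnd ℂ c) * star (v i)
          rw [star_mul']
          rfl
        show starVec (c • v) ∈ W
        rw [h]; exact W.smul_mem _ hv }
  have hWbarW' : Wbar = W' := by
    rw [hWbar]
    apply le_antisymm
    · rw [Submodule.span_le]
      rintro v ⟨w, hw, rfl⟩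
      show starVec (starVec w) ∈ W
      rw [hstst]; exact hw
    · intro v hv
      exact Submodule.subset_span ⟨starVec v, hv, (hstst v).symm⟩
  have hSWlb : ∀ t ∈ {t : ℝ | ∃ w ∈ W, ‖w‖ = 1 ∧ t = renyiOut p w}, C ≤ t := by
    intro t ht
    have hbdd : BddBelow {t : ℝ | ∃ w ∈ W, ‖w‖ = 1 ∧ t = renyiOut p w} := by
      by_contra hb
      rw [Real.sInf_of_not_bddBelow hb] at hmin
      linarith
    exact le_trans hmin (csInf_le hbdd ht)
  have hSWne : {t : ℝ | ∃ w ∈ W, ‖w‖ = 1 ∧ t = renyiOut p w}.Nonempty := by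
    by_contra h
    rw [Set.not_nonempty_iff_eq_empty] at h
    rw [h, Real.sInf_empty] at hmin
    linarith
  obtain ⟨t0, ht0⟩ := hSWne
  obtain ⟨w0, hw0W, hw0n, rfl⟩ := ht0
  have hSBlb : ∀ t ∈ {t : ℝ | ∃ w ∈ Wbar, ‖w‖ = 1 ∧ t = renyiOut p w}, C ≤ t := by
    rintro t ⟨v, hv, hvn, rfl⟩
    rw [hWbarW'] at hv
    have hmem : renyiOut p (starVec v) ∈ {t : ℝ | ∃ w ∈ W, ‖w‖ = 1 ∧ t = renyiOut p w} :=
      ⟨starVec v, hv, by rw [norm_starVec, hvn], rfl⟩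
    have h := hSWlb _ hmem
    rwa [renyiOut_starVec] at h
  have hSBne : {t : ℝ | ∃ w ∈ Wbar, ‖w‖ = 1 ∧ t = renyiOut p w}.Nonempty := by
    refine ⟨renyiOut p (starVec w0), starVec w0, ?_, by rw [norm_starVec, hw0n], rfl⟩
    rw [hWbarW']
    show starVec (starVec w0) ∈ W
    rw [hstst]; exact hw0W
  have hSB : C ≤ sInf {t : ℝ | ∃ w ∈ Wbar, ‖w‖ = 1 ∧ t = renyiOut p w} :=
    le_csInf hSBne hSBlb
  obtain ⟨ψ, hψW, hψn, hψc⟩ := hψ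
  have hmemL : renyiOut p (eta ψ) ∈
      {t : ℝ | ∃ ψ ∈ Wt, ‖ψ‖ = 1 ∧ t = renyiOut p (eta ψ)} := ⟨ψ, hψW, hψn, rfl⟩
  by_cases hb : BddBelow {t : ℝ | ∃ ψ ∈ Wt, ‖ψ‖ = 1 ∧ t = renyiOut p (eta ψ)}
  · have h1 : sInf {t : ℝ | ∃ ψ ∈ Wt, ‖ψ‖ = 1 ∧ t = renyiOut p (eta ψ)} ≤ c :=
      le_trans (csInf_le hb hmemL) hψc
    linarith
  · rw [Real.sInf_of_not_bddBelow hb]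
    linarith
end
end

section
/- Let G ⊂ ℂ have cardinality 2d−1 and for λ ∈ ℂ set u_λ = Σ_{k=0}^{d−1} λᵏ e_k ∈ ℂᵈ. Then the set {u_λ ⊗ u_λ : λ ∈ G} is linearly independent, so L = span{u_λ ⊗ u_λ : λ ∈ G} has dimension 2d−1 and its orthogonal complement S ⊂ ℂᵈ ⊗ ℂᵈ has dimension (d−1)². -/
noncomputable section

/-- The vector `u_λ = (1, λ, λ², …, λ^{d-1}) = ∑_k λᵏ e_k ∈ ℂᵈ`. -/
def uVec (d : ℕ) (lam : ℂ) : EuclideanSpace ℂ (Fin d) :=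
  WithLp.toLp 2 (fun k => lam ^ (k : ℕ))

/-- for a set `G` of `2d-1` distinct complex numbers, the family
`{u_λ ⊗ u_λ : λ ∈ G}` is linearly independent, so `L = span{u_λ ⊗ u_λ : λ ∈ G}` has dimension
`2d-1`, and `S = L^⊥ ⊂ ℂᵈ ⊗ ℂᵈ` has dimension `(d-1)²`. -/
theorem parthasarathy_dimensions (d : ℕ) (hd : 2 ≤ d) (G : Finset ℂ)
    (hG : G.card = 2 * d - 1) :
    LinearIndependent ℂ (fun lam : G => tens (uVec d lam) (uVec d lam)) ∧
    Module.finrank ℂ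
        (Submodule.span ℂ {w | ∃ lam ∈ G, w = tens (uVec d lam) (uVec d lam)}) = 2 * d - 1 ∧
    Module.finrank ℂ
        (Submodule.span ℂ {w | ∃ lam ∈ G, w = tens (uVec d lam) (uVec d lam)})ᗮ =
      (d - 1) ^ 2 := by
  have hd1 : 1 ≤ d := le_trans (by norm_num) hd
  -- linear map sending w to its values at positions (j,k) with j+k = m, m < 2d-1
  have hjk : ∀ m : Fin (2 * d - 1), min (m : ℕ) (d - 1) < d ∧
      (m : ℕ) - min (m : ℕ) (d - 1) < d := by
    intro m
    have := m.2
    omega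
  set T : EuclideanSpace ℂ (Fin d × Fin d) →ₗ[ℂ] (Fin (2 * d - 1) → ℂ) :=
    { toFun := fun w m => w (⟨min (m : ℕ) (d - 1), (hjk m).1⟩, ⟨(m : ℕ) - min (m : ℕ) (d - 1),
        (hjk m).2⟩)
      map_add' := fun _ _ => rfl
      map_smul' := fun _ _ => rfl } with hT
  -- the composed family is the Vandermonde family
  set e : G ≃ Fin (2 * d - 1) := G.equivFinOfCardEq hG with he
  have hinj : Function.Injective (fun i : Fin (2 * d - 1) => ((e.symm i : G) : ℂ)) := by
    intro i j hij
    have : (e.symm i : G) = (e.symm j : G) := Subtype.ext hij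
    simpa using e.symm.injective this
  have hvdm : LinearIndependent ℂ
      (fun i : Fin (2 * d - 1) => (Matrix.vandermonde
        (fun i : Fin (2 * d - 1) => ((e.symm i : G) : ℂ))) i) := by
    refine Matrix.linearIndependent_rows_iff_isUnit.2 ?_
    rw [Matrix.isUnit_iff_isUnit_det, isUnit_iff_ne_zero]
    exact Matrix.det_vandermonde_ne_zero_iff.2 hinj
  have hcomp : ∀ lam : G, T (tens (uVec d lam) (uVec d lam)) =
      (Matrix.vandermonde (fun i : Fin (2 * d - 1) => ((e.symm i : G) : ℂ))) (e lam) := by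
    intro lam
    funext m
    simp only [hT, LinearMap.coe_mk, AddHom.coe_mk, tens, uVec, Matrix.vandermonde,
      Matrix.of_apply, Equiv.symm_apply_apply]
    change (lam : ℂ) ^ (min (m : ℕ) (d - 1)) * (lam : ℂ) ^ ((m : ℕ) - min (m : ℕ) (d - 1)) = _
    rw [← pow_add]
    congr 1
    have := m.2
    omega
  have hli : LinearIndependent ℂ (fun lam : G => tens (uVec d lam) (uVec d lam)) := by
    apply LinearIndependent.of_comp T
    have : (T ∘ fun lam : G => tens (uVec d lam) (uVec d lam)) =
        (fun i : Fin (2 * d - 1) => (Matrix.vandermonde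
          (fun i : Fin (2 * d - 1) => ((e.symm i : G) : ℂ))) i) ∘ e := by
      funext lam
      exact hcomp lam
    rw [this]
    exact hvdm.comp e e.injective
  refine ⟨hli, ?_, ?_⟩
  · have hset : {w | ∃ lam ∈ G, w = tens (uVec d lam) (uVec d lam)} =
        Set.range (fun lam : G => tens (uVec d lam) (uVec d lam)) := by
      ext w
      constructor
      · rintro ⟨lam, hlam, rfl⟩; exact ⟨⟨lam, hlam⟩, rfl⟩
      · rintro ⟨⟨lam, hlam⟩, rfl⟩; exact ⟨lam, hlam, rfl⟩
    rw [hset, finrank_span_eq_card hli, Fintype.card_coe, hG]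
  · have hset : {w | ∃ lam ∈ G, w = tens (uVec d lam) (uVec d lam)} =
        Set.range (fun lam : G => tens (uVec d lam) (uVec d lam)) := by
      ext w
      constructor
      · rintro ⟨lam, hlam, rfl⟩; exact ⟨⟨lam, hlam⟩, rfl⟩
      · rintro ⟨⟨lam, hlam⟩, rfl⟩; exact ⟨lam, hlam, rfl⟩
    set L := Submodule.span ℂ {w | ∃ lam ∈ G, w = tens (uVec d lam) (uVec d lam)}
    have hL : Module.finrank ℂ L = 2 * d - 1 := by
      rw [show L = Submodule.span ℂ (Set.range (fun lam : G =>
        tens (uVec d lam) (uVec d lam))) from by rw [← hset]]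
      rw [finrank_span_eq_card hli, Fintype.card_coe, hG]
    have htot : Module.finrank ℂ (EuclideanSpace ℂ (Fin d × Fin d)) = d * d := by
      simp [finrank_euclideanSpace]
    have := Submodule.finrank_add_finrank_orthogonal L
    rw [hL, htot] at this
    obtain ⟨k, rfl⟩ : ∃ k, d = k + 1 := ⟨d - 1, by omega⟩
    have h2 : 2 * (k + 1) - 1 = 2 * k + 1 := by omega
    have hring : (k + 1) * (k + 1) = k ^ 2 + (2 * k + 1) := by ring
    simp only [Nat.add_sub_cancel]
    linarith [this]
end
end

section
/- Parthasarathy's subspace S = L^⊥, where L = span{u_λ ⊗ u_λ : λ ∈ G} for 2d−1 distinct λ, is completely entangled: S contains no nonzero simple tensor x ⊗ y. -/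
noncomputable section

open Polynomial

/-- Parthasarathy's subspace `S = L^⊥`, with
`L = span{u_λ ⊗ u_λ : λ ∈ G}` for a set `G` of `2d-1` distinct complex numbers, is completely
entangled: it contains no nonzero simple tensor `x ⊗ y`. -/
theorem parthasarathy_completely_entangled (d : ℕ) (G : Finset ℂ)
    (hG : G.card = 2 * d - 1) (L : Submodule ℂ (EuclideanSpace ℂ (Fin d × Fin d)))
    (hL : L = Submodule.span ℂ {w | ∃ lam ∈ G, w = tens (uVec d lam) (uVec d lam)}) :
    ∀ x y : EuclideanSpace ℂ (Fin d), tens x y ∈ Lᗮ → tens x y = 0 := by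
  intro x y hxy
  rcases Nat.eq_zero_or_pos d with rfl | hd
  · exact Subsingleton.elim _ _
  set P : ℂ[X] := ∑ j : Fin d, C (x j) * X ^ (j : ℕ) with hP
  set Q : ℂ[X] := ∑ j : Fin d, C (y j) * X ^ (j : ℕ) with hQ
  have hcoeffP : ∀ j : Fin d, P.coeff j = x j := by
    intro j
    rw [hP, finset_sum_coeff]
    simp only [coeff_C_mul, coeff_X_pow]
    rw [Finset.sum_eq_single j] <;> simp +contextual [Fin.val_eq_val, eq_comm]
  have hcoeffQ : ∀ j : Fin d, Q.coeff j = y j := by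
    intro j
    rw [hQ, finset_sum_coeff]
    simp only [coeff_C_mul, coeff_X_pow]
    rw [Finset.sum_eq_single j] <;> simp +contextual [Fin.val_eq_val, eq_comm]
  have hdegP : P.natDegree ≤ d - 1 := by
    apply Polynomial.natDegree_sum_le_of_forall_le
    intro j _
    exact (natDegree_C_mul_X_pow_le (x j) j).trans (by omega)
  have hdegQ : Q.natDegree ≤ d - 1 := by
    apply Polynomial.natDegree_sum_le_of_forall_le
    intro j _
    exact (natDegree_C_mul_X_pow_le (y j) j).trans (by omega)
  have heval : ∀ lam ∈ G, (P * Q).eval (starRingEnd ℂ lam) = 0 := by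
    intro lam hlam
    have hmem : tens (uVec d lam) (uVec d lam) ∈ L := by
      rw [hL]; exact Submodule.subset_span ⟨lam, hlam, rfl⟩
    have h0 := (Submodule.mem_orthogonal L (tens x y)).1 hxy _ hmem
    rw [PiLp.inner_apply] at h0
    simp only [RCLike.inner_apply, tens, uVec] at h0
    rw [eval_mul, hP, hQ]
    simp only [eval_finset_sum, eval_mul, eval_C, eval_pow, eval_X]
    rw [← h0, Finset.sum_mul_sum, Fintype.sum_prod_type]
    refine Finset.sum_congr rfl fun j _ => Finset.sum_congr rfl fun k _ => ?_
    simp only [map_mul, map_pow]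
    ring
  have hPQ : P * Q = 0 := by
    apply eq_zero_of_natDegree_lt_card_of_eval_eq_zero' (P * Q) (G.image (starRingEnd ℂ))
    · intro i hi
      rcases Finset.mem_image.1 hi with ⟨lam, hlam, rfl⟩
      exact heval lam hlam
    · rw [Finset.card_image_of_injective _ (starRingEnd ℂ).injective, hG]
      calc (P * Q).natDegree ≤ P.natDegree + Q.natDegree := natDegree_mul_le
        _ < 2 * d - 1 := by omega
  rcases mul_eq_zero.1 hPQ with h | h
  · have : x = 0 := by
      ext j; rw [← hcoeffP j, h]; simp
    ext p; simp [tens, this]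
  · have : y = 0 := by
      ext j; rw [← hcoeffQ j, h]; simp
    ext p; simp [tens, this]
end
end
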